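/- Given finite S ⊆ TI and E ⊆ T(I+1), letting S' = S ∪ {η_I(x) : x ∈ I} ∪ {(γ_I ∘ Fj)(x) : x ∈ FS} (where j : S → TI is inclusion), the contextual wrapper (α_{S'}, β_E) is locally closed with respect to α_S; moreover if α_S = [i_t, δ_t]^ρ for a recursive coalgebra ρ : S → F_I S, then there is a recursive coalgebra ρ' : S' → F_I S' with α_{S'} = [i_t, δ_t]^{ρ'}. -/

import Mathlib

open CategoryTheory

universe u

/-- Recursiveness of a coalgebra `ρ : S → I ⊕ F S` for the functor `F_I X = I ⊕ F X` on `Set`. -/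
def RecursiveSet (F : Type u ⥤ Type u) (I : Type u) {S : Type u}
    (ρ : S → I ⊕ F.obj S) : Prop :=
  ∀ (X : Type u) (x : I ⊕ F.obj X → X),
    ∃! f : S → X, ∀ s, f s = x (Sum.map id (F.map (TypeCat.ofHom f)) (ρ s))

/-- Auxiliary "pre-coalgebra" on `S'`: classify each element of `S'` into one of three cases. -/
noncomputable def sigmaAux (F : Type u ⥤ Type u) {TI : Type u} {I : Type u}
    (η : I → TI) (γI : F.obj TI → TI) (S S' : Set TI)
    (hdisj : ∀ s' : S', (s' : TI) ∈ S ∨ (∃ x : I, η x = (s' : TI)) ∨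
      ∃ y : F.obj S, γI (F.map (TypeCat.ofHom (fun s : S => (s : TI))) y) = (s' : TI))
    (ρ : S → I ⊕ F.obj S) (s' : S') : I ⊕ F.obj S :=
  haveI := Classical.dec ((s' : TI) ∈ S)
  haveI := Classical.dec (∃ x : I, η x = (s' : TI))
  if h : (s' : TI) ∈ S then ρ ⟨s', h⟩
  else if h2 : ∃ x : I, η x = (s' : TI) then Sum.inl h2.choose
  else Sum.inr (((hdisj s').resolve_left h).resolve_left h2).choose

theorem sigmaAux_spec (F : Type u ⥤ Type u) {TI : Type u} {I : Type u}
    (η : I → TI) (γI : F.obj TI → TI) (S S' : Set TI)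
    (hdisj : ∀ s' : S', (s' : TI) ∈ S ∨ (∃ x : I, η x = (s' : TI)) ∨
      ∃ y : F.obj S, γI (F.map (TypeCat.ofHom (fun s : S => (s : TI))) y) = (s' : TI))
    (ρ : S → I ⊕ F.obj S) (s' : S') :
    (∃ h : (s' : TI) ∈ S, sigmaAux F η γI S S' hdisj ρ s' = ρ ⟨s', h⟩) ∨
    (∃ x : I, sigmaAux F η γI S S' hdisj ρ s' = Sum.inl x ∧ η x = (s' : TI)) ∨
    (∃ y : F.obj S, sigmaAux F η γI S S' hdisj ρ s' = Sum.inr y ∧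
      γI (F.map (TypeCat.ofHom (fun s : S => (s : TI))) y) = (s' : TI)) := by
  unfold sigmaAux
  split_ifs with h h2
  · exact Or.inl ⟨h, rfl⟩
  · exact Or.inr (Or.inl ⟨h2.choose, rfl, h2.choose_spec⟩)
  · exact Or.inr (Or.inr ⟨_, rfl, (((hdisj s').resolve_left h).resolve_left h2).choose_spec⟩)

theorem sigmaAux_incl (F : Type u ⥤ Type u) {TI : Type u} {I : Type u}
    (η : I → TI) (γI : F.obj TI → TI) (S S' : Set TI)
    (hdisj : ∀ s' : S', (s' : TI) ∈ S ∨ (∃ x : I, η x = (s' : TI)) ∨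
      ∃ y : F.obj S, γI (F.map (TypeCat.ofHom (fun s : S => (s : TI))) y) = (s' : TI))
    (ρ : S → I ⊕ F.obj S) (s : S) (h : (s : TI) ∈ S') :
    sigmaAux F η γI S S' hdisj ρ ⟨s, h⟩ = ρ s := by
  unfold sigmaAux
  rw [dif_pos s.2]

/-- The recursive-coalgebra extension step, factored out of the main theorem. -/
theorem extend_rec (F : Type u ⥤ Type u) {TI I Qt : Type u}
    (η : I → TI) (γI : F.obj TI → TI) (S S' : Set TI)
    (hmemS : ∀ s : S, (s : TI) ∈ S')
    (hdisj : ∀ s' : S', (s' : TI) ∈ S ∨ (∃ x : I, η x = (s' : TI)) ∨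
      ∃ y : F.obj S, γI (F.map (TypeCat.ofHom (fun s : S => (s : TI))) y) = (s' : TI))
    (reach : TI → Qt) (it : I → Qt) (δt : F.obj Qt → Qt)
    (hreach1 : ∀ x : I, reach (η x) = it x)
    (hkey : ∀ y : F.obj S, reach (γI (F.map (TypeCat.ofHom (fun s : S => (s : TI))) y)) =
      δt (F.map (TypeCat.ofHom (fun s : S => reach (s : TI))) y))
    (ρ : S → I ⊕ F.obj S) (hrec : RecursiveSet F I ρ)
    (hcomp : ∀ s : S, reach (s : TI) =
      Sum.elim it δt (Sum.map id (F.map (TypeCat.ofHom (fun t : S => reach (t : TI)))) (ρ s))) :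
    ∃ ρ' : S' → I ⊕ F.obj S', RecursiveSet F I ρ' ∧
      ∀ s' : S', reach (s' : TI) =
        Sum.elim it δt (Sum.map id (F.map (TypeCat.ofHom (fun t : S' => reach (t : TI)))) (ρ' s')) := by
  have hFcomp : ∀ {A B C : Type u} (g : A → B) (h : B → C) (a : F.obj A),
      F.map (TypeCat.ofHom h) (F.map (TypeCat.ofHom g) a) = F.map (TypeCat.ofHom (fun a => h (g a))) a := by
    intro A B C g h a
    rw [← FunctorToTypes.map_comp_apply]; rfl
  have hmapmap : ∀ {A B C : Type u} (g : A → B) (h : B → C) (z : I ⊕ F.obj A),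
      Sum.map id (F.map (TypeCat.ofHom h)) (Sum.map id (F.map (TypeCat.ofHom g)) z) =
        Sum.map id (F.map (TypeCat.ofHom (fun a => h (g a)))) z := by
    intro A B C g h z
    cases z with
    | inl i => rfl
    | inr y => simp only [Sum.map_inr]; rw [hFcomp]
  set ι : S → S' := fun s => ⟨(s : TI), hmemS s⟩ with hι
  set σ : S' → I ⊕ F.obj S := sigmaAux F η γI S S' hdisj ρ with hσdef
  have hσι : ∀ s : S, σ (ι s) = ρ s := fun s =>
    sigmaAux_incl F η γI S S' hdisj ρ s (hmemS s)
  have helim : ∀ z : I ⊕ F.obj S,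
      Sum.elim it δt (Sum.map id (F.map (TypeCat.ofHom (fun t : S' => reach (t : TI))))
        (Sum.map id (F.map (TypeCat.ofHom ι)) z)) =
      Sum.elim it δt (Sum.map id (F.map (TypeCat.ofHom (fun t : S => reach (t : TI)))) z) := by
    intro z
    cases z with
    | inl i => rfl
    | inr y =>
      simp only [Sum.map_inr, Sum.elim_inr]
      rw [hFcomp]
  refine ⟨fun s' => Sum.map id (F.map (TypeCat.ofHom ι)) (σ s'), ?_, ?_⟩
  · -- recursiveness
    intro X x
    obtain ⟨f, hf, hfuniq⟩ := hrec X x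
    have hfι : ∀ s : S, x (Sum.map id (F.map (TypeCat.ofHom f)) (σ (ι s))) = f s := by
      intro s
      rw [hσι]
      exact (hf s).symm
    have hff : (fun s : S => x (Sum.map id (F.map (TypeCat.ofHom f)) (σ (ι s)))) = f := funext hfι
    refine ⟨fun s' => x (Sum.map id (F.map (TypeCat.ofHom f)) (σ s')), ?_, ?_⟩
    · intro s'
      dsimp only
      rw [hmapmap]
      exact (congrArg (fun h => x (Sum.map id (F.map (TypeCat.ofHom h)) (σ s'))) hff).symm
    · intro g hg
      have hgρ : ∀ s : S, g (ι s) = x (Sum.map id (F.map (TypeCat.ofHom (fun s : S => g (ι s)))) (ρ s)) := by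
        intro s
        rw [hg (ι s)]
        dsimp only
        rw [hmapmap, hσι]
      have hgf : (fun s : S => g (ι s)) = f := hfuniq _ hgρ
      funext s'
      rw [hg s']
      dsimp only
      rw [hmapmap]
      exact congrArg (fun h => x (Sum.map id (F.map (TypeCat.ofHom h)) (σ s'))) hgf
  · -- compatibility with reach
    intro s'
    dsimp only
    rcases sigmaAux_spec F η γI S S' hdisj ρ s' with
      ⟨h, hσ⟩ | ⟨x, hσ, hx⟩ | ⟨y, hσ, hy⟩
    all_goals rw [← hσdef] at hσ
    · rw [hσ, helim]
      exact hcomp ⟨s', h⟩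
    · rw [hσ, helim, ← hx, hreach1]
      rfl
    · rw [hσ, helim, ← hy, hkey]
      rfl

theorem stmt12 (F : Type u ⥤ Type u)
    (hFfin : ∀ X : Type u, Finite X → Finite (F.obj X))
    (T : CategoryTheory.Monad (Type u))
    (γ : ∀ X : Type u, F.obj (T.obj X) → T.obj X)
    (hγnat : ∀ (X Y : Type u) (f : X → Y) (b : F.obj (T.obj X)),
      γ Y (F.map (T.map (TypeCat.ofHom f)) b) = T.map (TypeCat.ofHom f) (γ X b))
    (hfree : ∀ (X Z : Type u) (z : F.obj Z → Z) (f : X → Z),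
      ∃! g : T.obj X → Z,
        (∀ a, g (T.η.app X a) = f a) ∧ (∀ b, g (γ X b) = z (F.map (TypeCat.ofHom g) b)))
    (I O Qt : Type u) (hI : Finite I)
    (δt : F.obj Qt → Qt) (it : I → Qt) (ot : Qt → O)
    (reach : T.obj I → Qt)
    (hreach1 : ∀ a, reach (T.η.app I a) = it a)
    (hreach2 : ∀ b, reach (γ I b) = δt (F.map (TypeCat.ofHom reach) b))
    (sh : Qt → T.obj (I ⊕ PUnit.{u + 1}) → Qt)
    (hsh1 : ∀ q a, sh q (T.η.app (I ⊕ PUnit.{u + 1}) a) = Sum.elim it (fun _ => q) a)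
    (hsh2 : ∀ q b, sh q (γ (I ⊕ PUnit.{u + 1}) b) = δt (F.map (TypeCat.ofHom (sh q)) b))
    (S : Set (T.obj I)) (hS : S.Finite)
    (E : Set (T.obj (I ⊕ PUnit.{u + 1}))) (hE : E.Finite)
    (βE : Qt → (E → O)) (hβE : ∀ q (e : E), βE q e = ot (sh q (e : T.obj (I ⊕ PUnit.{u+1}))))
    (S' : Set (T.obj I))
    (hS' : S' = S ∪ Set.range (fun x : I => T.η.app I x) ∪
      Set.range (fun y : F.obj S => γ I (F.map (TypeCat.ofHom (fun s : S => (s : T.obj I))) y))) :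
    -- (α_{S'}, β_E) is locally closed w.r.t. α_S
    ((Set.range (fun s : S => reach (s : T.obj I)) ⊆
        Set.range (fun s : S' => reach (s : T.obj I))) ∧
      (∃ iW : I → Set.range (fun s : S' => βE (reach (s : T.obj I))),
        ∀ x, (iW x : E → O) = βE (it x)) ∧
      (∃ lclose : F.obj S → Set.range (fun s : S' => βE (reach (s : T.obj I))),
        ∀ y, (lclose y : E → O) =
          βE (δt (F.map (TypeCat.ofHom (fun s : S => reach (s : T.obj I))) y)))) ∧
    -- and if α_S comes from a recursive coalgebra then so does α_{S'}
    (∀ ρ : S → I ⊕ F.obj S, RecursiveSet F I ρ →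
      (∀ s : S, reach (s : T.obj I) =
        Sum.elim it δt (Sum.map id (F.map (TypeCat.ofHom (fun t : S => reach (t : T.obj I)))) (ρ s))) →
      ∃ ρ' : S' → I ⊕ F.obj S', RecursiveSet F I ρ' ∧
        ∀ s : S', reach (s : T.obj I) =
          Sum.elim it δt (Sum.map id (F.map (TypeCat.ofHom (fun t : S' => reach (t : T.obj I)))) (ρ' s))) := by
  have hmemS : ∀ s : S, (s : T.obj I) ∈ S' := fun s => by
    rw [hS']; exact Or.inl (Or.inl s.2)
  have hmemη : ∀ x : I, T.η.app I x ∈ S' := fun x => by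
    rw [hS']; exact Or.inl (Or.inr ⟨x, rfl⟩)
  have hmemγ : ∀ y : F.obj S, γ I (F.map (TypeCat.ofHom (fun s : S => (s : T.obj I))) y) ∈ S' := fun y => by
    rw [hS']; exact Or.inr ⟨y, rfl⟩
  have hFcomp : ∀ {A B C : Type u} (g : A → B) (h : B → C) (a : F.obj A),
      F.map (TypeCat.ofHom h) (F.map (TypeCat.ofHom g) a) = F.map (TypeCat.ofHom (fun a => h (g a))) a := by
    intro A B C g h a
    rw [← FunctorToTypes.map_comp_apply]; rfl
  have hkey : ∀ y : F.obj S, reach (γ I (F.map (TypeCat.ofHom (fun s : S => (s : T.obj I))) y)) =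
      δt (F.map (TypeCat.ofHom (fun s : S => reach (s : T.obj I))) y) := by
    intro y
    rw [hreach2, hFcomp]
  constructor
  · refine ⟨?_,
      ⟨fun x => ⟨βE (reach ((⟨T.η.app I x, hmemη x⟩ : S') : T.obj I)),
        ⟨⟨T.η.app I x, hmemη x⟩, rfl⟩⟩, ?_⟩,
      ⟨fun y => ⟨βE (reach ((⟨_, hmemγ y⟩ : S') : T.obj I)), ⟨⟨_, hmemγ y⟩, rfl⟩⟩, ?_⟩⟩
    · rintro q ⟨s, rfl⟩
      exact ⟨⟨s, hmemS s⟩, rfl⟩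
    · intro x
      simp [hreach1]
    · intro y
      simp [hkey y]
  · intro ρ hrec hcomp
    have hdisj : ∀ s' : S', (s' : T.obj I) ∈ S ∨ (∃ x : I, T.η.app I x = (s' : T.obj I)) ∨
        ∃ y : F.obj S, γ I (F.map (TypeCat.ofHom (fun s : S => (s : T.obj I))) y) = (s' : T.obj I) := by
      rintro ⟨v, hv⟩
      rw [hS'] at hv
      rcases hv with (h | ⟨x, hx⟩) | ⟨y, hy⟩
      · exact Or.inl h
      · exact Or.inr (Or.inl ⟨x, hx⟩)
      · exact Or.inr (Or.inr ⟨y, hy⟩)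
    exact extend_rec F (T.η.app I) (γ I) S S' hmemS hdisj reach it δt hreach1 hkey ρ hrec hcomp
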